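/- The abstraction signature is a signature: for C with binary coproducts and a terminal object, H^Abs(T) := T·option, where option(X) := 1 + X, together with θ^Abs_{X,(Z,e)} whose component at A is X[e_{1+A} ∘ inl, Z(inr)] : X(1 + Z A) → X(Z(1 + A)), satisfies the unit and composition coherence laws of a signature. -/

import Mathlib

open CategoryTheory Limits

universe v u

/-- A pointed endofunctor on `C`. -/
structure Ptd (C : Type u) [Category.{v} C] where
  Z : C ⥤ C
  e : 𝟭 C ⟶ Z

variable {C : Type u} [Category.{v} C]

/-- The property of `(H, θ)` being a *signature*: `θ : (H −)·U∼ ⟶ H (−·U∼)` is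
natural in both variables and satisfies the unit and composition coherence laws
(here `X·Z` is the composite `Z ⋙ X`). -/
structure IsSignature (H : (C ⥤ C) ⥤ (C ⥤ C))
    (θ : ∀ (X : C ⥤ C) (Z : Ptd C), (Z.Z ⋙ H.obj X) ⟶ H.obj (Z.Z ⋙ X)) : Prop where
  nat_X : ∀ {X X' : C ⥤ C} (α : X ⟶ X') (Z : Ptd C),
      Functor.whiskerLeft Z.Z (H.map α) ≫ θ X' Z = θ X Z ≫ H.map (Functor.whiskerLeft Z.Z α)
  nat_Z : ∀ (X : C ⥤ C) {Z Z' : Ptd C} (g : Z.Z ⟶ Z'.Z), Z.e ≫ g = Z'.e →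
      Functor.whiskerRight g (H.obj X) ≫ θ X Z' = θ X Z ≫ H.map (Functor.whiskerRight g X)
  unit : ∀ X : C ⥤ C,
      θ X ⟨𝟭 C, 𝟙 (𝟭 C)⟩ =
        (Functor.leftUnitor (H.obj X)).hom ≫ H.map (Functor.leftUnitor X).inv
  comp : ∀ (X : C ⥤ C) (Z Z' : Ptd C),
      θ X ⟨Z.Z ⋙ Z'.Z, Z.e ≫ Functor.whiskerLeft Z.Z Z'.e⟩ =
        (Functor.associator Z.Z Z'.Z (H.obj X)).hom ≫
          Functor.whiskerLeft Z.Z (θ X Z') ≫ θ (Z'.Z ⋙ X) Z ≫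
          H.map (Functor.associator Z.Z Z'.Z X).inv


variable [Limits.HasBinaryCoproducts C] [Limits.HasTerminal C]

/-- The `option` functor `A ↦ 1 + A` ("context extension"). -/
noncomputable def optionF : C ⥤ C where
  obj A := Limits.coprod (⊤_ C) A
  map f := Limits.coprod.map (𝟙 (⊤_ C)) f
  map_id := by intros; simp
  map_comp := by intros; simp

/-- The abstraction signature functor `H^Abs (T) := T·option`, i.e.
`A ↦ T (1 + A)`. -/
noncomputable def Habs : (C ⥤ C) ⥤ (C ⥤ C) where
  obj T := optionF (C := C) ⋙ T
  map f := Functor.whiskerLeft (optionF (C := C)) f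
  map_id := by intros; simp
  map_comp := by intros; simp

/-- The strength `θ^Abs_{X,(Z,e)}`, whose component at `A` is
`X [e_{1+A} ∘ inl, Z(inr)] : X (1 + Z A) ⟶ X (Z (1 + A))`. -/
noncomputable def θabs (X : C ⥤ C) (Z : Ptd C) :
    (Z.Z ⋙ (Habs (C := C)).obj X) ⟶ (Habs (C := C)).obj (Z.Z ⋙ X) where
  app A := X.map (Limits.coprod.desc
    (Limits.coprod.inl ≫ Z.e.app ((optionF (C := C)).obj A))
    (Z.Z.map Limits.coprod.inr))
  naturality := by
    intro A B f
    show X.map _ ≫ X.map _ = X.map _ ≫ X.map _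
    erw [← X.map_comp, ← X.map_comp]
    congr 1
    apply Limits.coprod.hom_ext
    · simp [optionF, ← NatTrans.naturality]
      erw [Limits.coprod.inl_desc]; try erw [Limits.coprod.inl_desc]
    · simp only [optionF]
      rw [Limits.coprod.inr_map_assoc, Limits.coprod.inr_desc,
        Limits.coprod.inr_desc_assoc, ← Z.Z.map_comp, ← Z.Z.map_comp,
        Limits.coprod.inr_map]

/-- **The abstraction signature is a signature**: for `C` with binary coproducts and
a terminal object, `(H^Abs, θ^Abs)` satisfies the unit and composition coherence
laws (and the naturality conditions) of a signature. -/
theorem abs_isSignature : IsSignature (Habs (C := C)) (θabs (C := C)) := by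
  constructor
  · intro X X' α Z
    ext A
    simp only [NatTrans.comp_app, Functor.whiskerLeft_app, Habs, θabs, Functor.whiskerLeft_app]
    exact (α.naturality _).symm
  · intro X Z Z' g hg
    ext A
    simp only [NatTrans.comp_app, Functor.whiskerRight_app, Habs, θabs, Functor.whiskerLeft_app,
      Functor.comp_map]
    erw [← X.map_comp, ← X.map_comp]
    congr 1
    apply Limits.coprod.hom_ext
    · simp only [optionF, Limits.coprod.inl_map_assoc, Category.id_comp,
        Limits.coprod.inl_desc, Limits.coprod.inl_desc_assoc, Category.assoc]
      rw [← NatTrans.comp_app, hg]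
    · simp only [optionF, Limits.coprod.inr_map_assoc, Limits.coprod.inr_desc,
        Limits.coprod.inr_desc_assoc]
      exact (g.naturality _).symm
  · intro X
    ext A
    simp only [NatTrans.comp_app, θabs, Habs, Functor.leftUnitor, NatTrans.id_app,
      Functor.whiskerLeft_app,
      Functor.id_map, Functor.id_obj, Category.comp_id, Category.id_comp,
      Limits.coprod.desc_inl_inr, X.map_id]
    erw [show (Limits.coprod.inl ≫ 𝟙 ((optionF (C := C)).obj A) : _) = Limits.coprod.inl
        from Category.comp_id _, Limits.coprod.desc_inl_inr]
    exact (X.map_id _).trans (Category.comp_id _).symm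
  · intro X Z Z'
    ext A
    simp only [NatTrans.comp_app, θabs, Habs, Functor.whiskerLeft_app, Functor.associator,
      Category.id_comp, Category.comp_id, Functor.comp_map, Functor.comp_obj]
    erw [← X.map_comp]
    congr 1
    apply Limits.coprod.hom_ext
    · simp only [Limits.coprod.inl_desc, Limits.coprod.inl_desc_assoc, Category.assoc]
      erw [Limits.coprod.inl_desc_assoc, Category.assoc, ← Z'.e.naturality, Functor.id_map, Limits.coprod.inl_desc_assoc, Category.assoc]
      rfl
    · simp only [Limits.coprod.inr_desc, Limits.coprod.inr_desc_assoc, ← Z'.Z.map_comp,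
        Limits.coprod.inr_desc, Functor.comp_map]
      erw [Limits.coprod.inr_desc_assoc, ← Z'.Z.map_comp, Limits.coprod.inr_desc]
      rfl
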